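/- Let G be a simple graph with distinguished vertices m₁, m₂ (non-adjacent) such that G + m₁m₂ is 3-vertex-connected. If C is a cycle in G avoiding m₁ and m₂, vw an edge of C, and x a vertex of C other than v, w, then there exists a path in G from x to m₁ or from x to m₂ that avoids both v and w. -/

import Mathlib

/-- `G` with the extra edge `a b` added. -/
def addEdge {V : Type*} (G : SimpleGraph V) (a b : V) : SimpleGraph V :=
  G ⊔ SimpleGraph.fromEdgeSet {s(a, b)}

/-- `G` is `k`-vertex-connected: more than `k` vertices and deleting any fewer
than `k` vertices leaves the graph connected. -/
def KConn {V : Type*} [Fintype V] [DecidableEq V] (G : SimpleGraph V) (k : ℕ) : Prop :=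
  k < Fintype.card V ∧
    ∀ S : Finset V, S.card < k → (G.induce ((↑S : Set V)ᶜ)).Connected

theorem stmt_16 {V : Type*} [Fintype V] [DecidableEq V]
    (G : SimpleGraph V) (m₁ m₂ : V) (hne : m₁ ≠ m₂) (hnadj : ¬ G.Adj m₁ m₂)
    (h3 : KConn (addEdge G m₁ m₂) 3)
    (v w : V) (c : G.Walk v v) (hc : c.IsCycle)
    (hm₁ : m₁ ∉ c.support) (hm₂ : m₂ ∉ c.support)
    (hvw : s(v, w) ∈ c.edges)
    (x : V) (hx : x ∈ c.support) (hxv : x ≠ v) (hxw : x ≠ w) :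
    ∃ m, (m = m₁ ∨ m = m₂) ∧
      ∃ p : G.Walk x m, p.IsPath ∧ v ∉ p.support ∧ w ∉ p.support := by
  classical
  have hv : v ∈ c.support := c.start_mem_support
  have hw : w ∈ c.support := SimpleGraph.Walk.snd_mem_support_of_mem_edges c hvw
  have hm1v : m₁ ≠ v := fun h => hm₁ (h ▸ hv)
  have hm1w : m₁ ≠ w := fun h => hm₁ (h ▸ hw)
  set S : Finset V := {v, w} with hS
  have hcard : S.card < 3 := lt_of_le_of_lt (Finset.card_insert_le _ _) (by simp)
  have hconn := h3.2 S hcard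
  have hxS : x ∈ ((↑S : Set V)ᶜ) := by simp [hS, hxv, hxw]
  have hm1S : m₁ ∈ ((↑S : Set V)ᶜ) := by simp [hS, hm1v, hm1w]
  obtain ⟨q0⟩ := hconn ⟨x, hxS⟩ ⟨m₁, hm1S⟩
  -- map to addEdge G
  let q1 : (addEdge G m₁ m₂).Walk x m₁ :=
    q0.map (SimpleGraph.Embedding.induce ((↑S : Set V)ᶜ)).toHom
  have hq1supp : ∀ y ∈ q1.support, y ∈ ((↑S : Set V)ᶜ) := by
    intro y hy
    rw [show q1.support = q0.support.map (SimpleGraph.Embedding.induce ((↑S : Set V)ᶜ)).toHom from SimpleGraph.Walk.support_map _ _] at hy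
    obtain ⟨z, _, rfl⟩ := List.mem_map.mp hy
    exact z.2
  let p : (addEdge G m₁ m₂).Walk x m₁ := q1.bypass
  have hp : p.IsPath := q1.bypass_isPath
  have hpsupp : ∀ y ∈ p.support, y ∈ ((↑S : Set V)ᶜ) := fun y hy =>
    hq1supp y (q1.support_bypass_subset hy)
  have hvS : v ∉ ((↑S : Set V)ᶜ) := by simp [hS]
  have hwS : w ∉ ((↑S : Set V)ᶜ) := by simp [hS]
  by_cases hm2p : m₂ ∈ p.support
  · -- truncate at m₂
    let q := p.takeUntil m₂ hm2p
    have hqpath : q.IsPath := hp.takeUntil hm2p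
    have hqsub : q.support ⊆ p.support := p.support_takeUntil_subset hm2p
    have hm1q : m₁ ∉ q.support := by
      intro hmem
      have hspec := p.take_spec hm2p
      have hnodup : p.support.Nodup := hp.support_nodup
      rw [← hspec, SimpleGraph.Walk.support_append] at hnodup
      have hdisj := List.disjoint_of_nodup_append hnodup
      have hm1drop : m₁ ∈ (p.dropUntil m₂ hm2p).support.tail := by
        have hend : m₁ ∈ (p.dropUntil m₂ hm2p).support :=
          SimpleGraph.Walk.end_mem_support _
        rw [SimpleGraph.Walk.support_eq_cons] at hend
        rcases List.mem_cons.mp hend with h | h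
        · exact absurd h hne
        · exact h
      exact hdisj hmem hm1drop
    have hG : ∀ e ∈ q.edges, e ∈ G.edgeSet := by
      intro e he
      have := q.edges_subset_edgeSet he
      rw [addEdge, SimpleGraph.edgeSet_sup] at this
      rcases this with h | h
      · exact h
      · exfalso
        rw [SimpleGraph.edgeSet_fromEdgeSet] at h
        obtain ⟨h1, _⟩ := h
        rw [Set.mem_singleton_iff] at h1
        subst h1
        exact hm1q (q.fst_mem_support_of_mem_edges he)
    refine ⟨m₂, Or.inr rfl, q.transfer G hG, hqpath.transfer hG, ?_, ?_⟩
    · rw [SimpleGraph.Walk.support_transfer]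
      exact fun h => hvS (hpsupp v (hqsub h))
    · rw [SimpleGraph.Walk.support_transfer]
      exact fun h => hwS (hpsupp w (hqsub h))
  · -- m₂ not on p: all edges are in G
    have hG : ∀ e ∈ p.edges, e ∈ G.edgeSet := by
      intro e he
      have := p.edges_subset_edgeSet he
      rw [addEdge, SimpleGraph.edgeSet_sup] at this
      rcases this with h | h
      · exact h
      · exfalso
        rw [SimpleGraph.edgeSet_fromEdgeSet] at h
        obtain ⟨h1, _⟩ := h
        rw [Set.mem_singleton_iff] at h1
        subst h1
        exact hm2p (p.snd_mem_support_of_mem_edges he)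
    refine ⟨m₁, Or.inl rfl, p.transfer G hG, hp.transfer hG, ?_, ?_⟩
    · rw [SimpleGraph.Walk.support_transfer]
      exact fun h => hvS (hpsupp v h)
    · rw [SimpleGraph.Walk.support_transfer]
      exact fun h => hwS (hpsupp w h)
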